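/- Let S ⊆ ℝ be an open interval, let F : ℝ → [0,1] be a twice continuously differentiable CDF with derivative f = F′ satisfying f(x) > 0 for all x ∈ S and F(S) = (0,1). Let (H, 𝒜) be a measurable space, let {F_h}_{h ∈ H} be a family of twice continuously differentiable CDFs with derivatives f_h and second derivatives f_h′ uniformly bounded over h ∈ H, such that (x,h) ↦ F_h(x) is measurable in h, and suppose f_h′(x)·f(x) ≥ f′(x)·f_h(x) for all x ∈ S and all h ∈ H. Let Π be a probability measure on (H, 𝒜). Then the CDF of p-values G(p) = ∫_H (1 − F_h(F⁻¹(1−p))) dΠ(h) is concave on (0,1); equivalently, its derivative g (the p-curve) is continuously differentiable with g′(p) ≤ 0 for all p ∈ (0,1). -/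

import Mathlib

open Set Filter Topology MeasureTheory

set_option maxHeartbeats 2000000

lemma meas_deriv {H : Type*} [MeasurableSpace H] {g : H → ℝ → ℝ}
    (hdiff : ∀ h, Differentiable ℝ (g h))
    (hmeas : ∀ x : ℝ, Measurable fun h => g h x) (x : ℝ) :
    Measurable fun h => deriv (g h) x := by
  have hseq : Tendsto (fun n : ℕ => x + ((n : ℝ) + 1)⁻¹) atTop (𝓝[≠] x) := by
    apply tendsto_nhdsWithin_of_tendsto_nhds_of_eventually_within
    · have h0 : Tendsto (fun n : ℕ => ((n : ℝ) + 1)⁻¹) atTop (𝓝 0) := by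
        simpa [one_div] using tendsto_one_div_add_atTop_nhds_zero_nat (𝕜 := ℝ)
      simpa using (tendsto_const_nhds.add h0 :
        Tendsto (fun n : ℕ => x + ((n:ℝ)+1)⁻¹) atTop (𝓝 (x + 0)))
    · filter_upwards with n
      have : ((n : ℝ) + 1)⁻¹ ≠ 0 := by positivity
      simp [this]
  have key : ∀ h, Tendsto (fun n : ℕ => (g h (x + ((n : ℝ) + 1)⁻¹) - g h x) * ((n : ℝ) + 1))
      atTop (𝓝 (deriv (g h) x)) := by
    intro h
    have hd := (hdiff h x).hasDerivAt
    rw [hasDerivAt_iff_tendsto_slope] at hd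
    have := hd.comp hseq
    refine this.congr fun n => ?_
    have hne : ((n : ℝ) + 1) ≠ 0 := by positivity
    rw [Function.comp_apply, slope_def_field, add_sub_cancel_left, div_inv_eq_mul]
  exact measurable_of_tendsto_metrizable
    (fun n => ((hmeas _).sub (hmeas x)).mul_const _)
    (tendsto_pi_nhds.mpr key)


/-- Let S be an open interval, F a twice continuously differentiable CDF with
density f = F′ positive on S and F(S) = (0,1). Let {F_h}_{h ∈ H} be a measurable family of
twice continuously differentiable CDFs whose densities f_h and their derivatives f_h′ are
uniformly bounded over h, and suppose f_h′(x)·f(x) ≥ f′(x)·f_h(x) for all x ∈ S, h ∈ H.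
For a probability measure Π on H, the CDF of p-values
G(p) = ∫ (1 − F_h(F⁻¹(1−p))) dΠ(h) is concave on (0,1); equivalently its derivative g
(the p-curve) is continuously differentiable with g′(p) ≤ 0 on (0,1). -/
theorem stmt_1
    {H : Type*} [MeasurableSpace H]
    (S : Set ℝ) (hS_open : IsOpen S) (hS_conn : S.OrdConnected)
    (F : ℝ → ℝ)
    (hF_smooth : ContDiff ℝ 2 F)
    (hF_mono : Monotone F)
    (hF_bot : Tendsto F atBot (𝓝 0)) (hF_top : Tendsto F atTop (𝓝 1))
    (hf_pos : ∀ x ∈ S, 0 < deriv F x)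
    (hFS : F '' S = Ioo 0 1)
    (Fh : H → ℝ → ℝ)
    (hFh_smooth : ∀ h, ContDiff ℝ 2 (Fh h))
    (hFh_mono : ∀ h, Monotone (Fh h))
    (hFh_bot : ∀ h, Tendsto (Fh h) atBot (𝓝 0))
    (hFh_top : ∀ h, Tendsto (Fh h) atTop (𝓝 1))
    (hFh_meas : ∀ x : ℝ, Measurable fun h => Fh h x)
    (C : ℝ)
    (hbound : ∀ (h : H) (x : ℝ),
      |deriv (Fh h) x| ≤ C ∧ |deriv (deriv (Fh h)) x| ≤ C)
    (hMLR : ∀ (h : H), ∀ x ∈ S,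
      deriv (deriv (Fh h)) x * deriv F x ≥ deriv (deriv F) x * deriv (Fh h) x)
    (Pi : Measure H) [IsProbabilityMeasure Pi]
    (cv : ℝ → ℝ)
    (hcv_mem : ∀ p ∈ Ioo (0 : ℝ) 1, cv p ∈ S)
    (hcv_eq : ∀ p ∈ Ioo (0 : ℝ) 1, F (cv p) = 1 - p)
    (G : ℝ → ℝ) (hG : ∀ p : ℝ, G p = ∫ h, (1 - Fh h (cv p)) ∂Pi) :
    ConcaveOn ℝ (Ioo 0 1) G ∧
    ContDiffOn ℝ 1 (deriv G) (Ioo 0 1) ∧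
    (∀ p ∈ Ioo (0 : ℝ) 1, deriv (deriv G) p ≤ 0) := by
  -- basic facts
  have hHne : Nonempty H := by
    by_contra hne
    rw [not_nonempty_iff] at hne
    have h1 : Pi univ = 1 := measure_univ
    rw [Set.univ_eq_empty_iff.mpr hne, measure_empty] at h1
    exact zero_ne_one h1
  obtain ⟨h₀⟩ := hHne
  have hC0 : 0 ≤ C := le_trans (abs_nonneg _) (hbound h₀ 0).1
  have hIoo : IsOpen (Ioo (0:ℝ) 1) := isOpen_Ioo
  have hS_conv : Convex ℝ S := convex_iff_ordConnected.2 hS_conn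
  have hF_cont : Continuous F := hF_smooth.continuous
  have hF_smono : StrictMonoOn F S :=
    strictMonoOn_of_deriv_pos hS_conv hF_cont.continuousOn (by rwa [hS_open.interior_eq])
  have h21 : (1 : WithTop ℕ∞) + 1 = 2 := by norm_num
  have h01 : (0 : WithTop ℕ∞) + 1 = 1 := by norm_num
  have hf_cd : ContDiff ℝ 1 (deriv F) :=
    ((contDiff_succ_iff_deriv (n := 1)).mp (h21 ▸ hF_smooth)).2.2
  have hf_cont : Continuous (deriv F) := hf_cd.continuous
  have hf'_cont : Continuous (deriv (deriv F)) := by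
    have := ((contDiff_succ_iff_deriv (n := 0)).mp (h01 ▸ hf_cd)).2.2
    exact contDiff_zero.mp this
  have hfh_cd : ∀ h, ContDiff ℝ 1 (deriv (Fh h)) := fun h =>
    ((contDiff_succ_iff_deriv (n := 1)).mp (h21 ▸ hFh_smooth h)).2.2
  have hfh'_cont : ∀ h, Continuous (deriv (deriv (Fh h))) := fun h => by
    have := ((contDiff_succ_iff_deriv (n := 0)).mp (h01 ▸ hfh_cd h)).2.2
    exact contDiff_zero.mp this
  -- measurability
  have hmf : ∀ x : ℝ, Measurable fun h => deriv (Fh h) x := fun x =>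
    meas_deriv (fun h => (hFh_smooth h).differentiable two_ne_zero) hFh_meas x
  have hmf' : ∀ x : ℝ, Measurable fun h => deriv (deriv (Fh h)) x := fun x =>
    meas_deriv (fun h => (hfh_cd h).differentiable one_ne_zero) hmf x
  -- integrability of bounded measurable functions
  have hintC : ∀ (ψ : H → ℝ) (D : ℝ), Measurable ψ → (∀ h, |ψ h| ≤ D) → Integrable ψ Pi :=
    fun ψ D hm hb => ⟨hm.aestronglyMeasurable,
      HasFiniteIntegral.of_bounded (C := D) (ae_of_all _ fun h => by
        simpa [Real.norm_eq_abs] using hb h)⟩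
  have hFh01 : ∀ h x, |Fh h x| ≤ 1 := by
    intro h x
    rw [abs_le]
    constructor
    · have := (hFh_mono h).le_of_tendsto (hFh_bot h) x
      linarith
    · exact (hFh_mono h).ge_of_tendsto (hFh_top h) x
  -- regularity of cv
  have hcv_cd : ∀ p₀ ∈ Ioo (0:ℝ) 1, ContDiffAt ℝ 2 cv p₀ := by
    intro p₀ hp₀
    have hx₀S : cv p₀ ∈ S := hcv_mem p₀ hp₀
    have hfx₀ : 0 < deriv F (cv p₀) := hf_pos _ hx₀S
    have hcv_tendsto : Tendsto cv (𝓝 p₀) (𝓝 (cv p₀)) := by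
      rw [tendsto_order]
      obtain ⟨ε, hε, hballS⟩ := Metric.isOpen_iff.mp hS_open (cv p₀) hx₀S
      constructor
      · intro a ha
        set a' := max a (cv p₀ - ε/2) with ha'def
        have ha'lt : a' < cv p₀ := max_lt ha (by linarith)
        have ha'S : a' ∈ S := by
          apply hballS
          rw [Metric.mem_ball, Real.dist_eq, abs_lt]
          have : cv p₀ - ε/2 ≤ a' := le_max_right _ _
          constructor <;> linarith
        have hFa' : F a' < 1 - p₀ := by
          rw [← hcv_eq p₀ hp₀]; exact hF_smono ha'S hx₀S ha'lt
        have h1 : ∀ᶠ p in 𝓝 p₀, F a' < 1 - p := by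
          have hopen : IsOpen {p : ℝ | F a' < 1 - p} :=
            isOpen_lt continuous_const (by continuity)
          exact hopen.eventually_mem hFa'
        filter_upwards [h1, hIoo.eventually_mem hp₀] with p h1p h2p
        by_contra hc
        push_neg at hc
        have : F (cv p) ≤ F a' := hF_mono (le_trans hc (le_max_left _ _))
        rw [hcv_eq p h2p] at this
        linarith
      · intro b hb
        set b' := min b (cv p₀ + ε/2) with hb'def
        have hb'gt : cv p₀ < b' := lt_min hb (by linarith)
        have hb'S : b' ∈ S := by
          apply hballS
          rw [Metric.mem_ball, Real.dist_eq, abs_lt]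
          have : b' ≤ cv p₀ + ε/2 := min_le_right _ _
          constructor <;> linarith
        have hFb' : 1 - p₀ < F b' := by
          rw [← hcv_eq p₀ hp₀]; exact hF_smono hx₀S hb'S hb'gt
        have h1 : ∀ᶠ p in 𝓝 p₀, 1 - p < F b' := by
          have hopen : IsOpen {p : ℝ | 1 - p < F b'} :=
            isOpen_lt (by continuity) continuous_const
          exact hopen.eventually_mem hFb'
        filter_upwards [h1, hIoo.eventually_mem hp₀] with p h1p h2p
        by_contra hc
        push_neg at hc
        have : F b' ≤ F (cv p) := hF_mono (le_trans (min_le_left _ _) hc)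
        rw [hcv_eq p h2p] at this
        linarith
    set u : ℝˣ := Units.mk0 (deriv F (cv p₀)) hfx₀.ne' with hu_def
    set e : ℝ ≃L[ℝ] ℝ := ContinuousLinearEquiv.unitsEquivAut ℝ u with he_def
    have hFd : HasFDerivAt F (e : ℝ →L[ℝ] ℝ) (cv p₀) := by
      have h1 : HasDerivAt F (deriv F (cv p₀)) (cv p₀) :=
        ((hF_smooth.differentiable two_ne_zero) _).hasDerivAt
      have h2 := h1.hasFDerivAt
      exact h2.congr_fderiv (by ext; simp [he_def, hu_def])
    have hF2 : ContDiffAt ℝ 2 F (cv p₀) := hF_smooth.contDiffAt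
    have hn2 : (2 : WithTop ℕ∞) ≠ 0 := two_ne_zero
    have hφ_cd : ContDiffAt ℝ 2 (hF2.localInverse hFd hn2) (F (cv p₀)) :=
      hF2.to_localInverse hFd hn2
    have hsf : HasStrictFDerivAt F (e : ℝ →L[ℝ] ℝ) (cv p₀) := hF2.hasStrictFDerivAt' hFd hn2
    set φ : ℝ → ℝ := hF2.localInverse hFd hn2 with hφ_def
    have hright : ∀ᶠ y in 𝓝 (F (cv p₀)), F (φ y) = y := hsf.eventually_right_inverse
    have hφ_cont : ContinuousAt φ (F (cv p₀)) := hsf.localInverse_continuousAt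
    have hφx₀ : φ (F (cv p₀)) = cv p₀ := hsf.localInverse_apply_image
    have h1m : Tendsto (fun p : ℝ => 1 - p) (𝓝 p₀) (𝓝 (F (cv p₀))) := by
      rw [hcv_eq p₀ hp₀]
      exact (continuous_const.sub continuous_id).tendsto p₀
    have hφ1m : Tendsto (fun p : ℝ => φ (1 - p)) (𝓝 p₀) (𝓝 (cv p₀)) := by
      rw [← hφx₀]
      exact hφ_cont.tendsto.comp h1m
    have hev : cv =ᶠ[𝓝 p₀] fun p => φ (1 - p) := by
      filter_upwards [hIoo.eventually_mem hp₀, h1m.eventually hright,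
        hφ1m.eventually (hS_open.eventually_mem hx₀S)] with p hp hrp hsp
      exact hF_smono.injOn (hcv_mem p hp) hsp (by rw [hcv_eq p hp, hrp])
    have hcomp : ContDiffAt ℝ 2 (fun p : ℝ => φ (1 - p)) p₀ := by
      have hlin : ContDiffAt ℝ 2 (fun p : ℝ => 1 - p) p₀ :=
        (contDiff_const.sub contDiff_id).contDiffAt
      have heq1 : (1 : ℝ) - p₀ = F (cv p₀) := by rw [hcv_eq p₀ hp₀]
      exact ContDiffAt.comp p₀ (heq1 ▸ hφ_cd) hlin
    exact hcomp.congr_of_eventuallyEq hev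
  have hcv_contAt : ∀ p ∈ Ioo (0:ℝ) 1, ContinuousAt cv p := fun p hp =>
    (hcv_cd p hp).continuousAt
  -- derivative of cv
  have hcv_deriv : ∀ p ∈ Ioo (0:ℝ) 1, HasDerivAt cv (-(deriv F (cv p))⁻¹) p := by
    intro p hp
    have hu : deriv F (cv p) ≠ 0 := (hf_pos _ (hcv_mem p hp)).ne'
    have hd : DifferentiableAt ℝ cv p := (hcv_cd p hp).differentiableAt two_ne_zero
    have hF' : HasDerivAt F (deriv F (cv p)) (cv p) :=
      ((hF_smooth.differentiable two_ne_zero) _).hasDerivAt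
    have hcomp : HasDerivAt (fun q => F (cv q)) (deriv F (cv p) * deriv cv p) p :=
      hF'.comp p hd.hasDerivAt
    have hev : (fun q => F (cv q)) =ᶠ[𝓝 p] fun q => 1 - q := by
      filter_upwards [hIoo.eventually_mem hp] with q hq using hcv_eq q hq
    have h1 : HasDerivAt (fun q : ℝ => 1 - q) (deriv F (cv p) * deriv cv p) p :=
      hcomp.congr_of_eventuallyEq hev.symm
    have h2 : HasDerivAt (fun q : ℝ => 1 - q) (-1 : ℝ) p := by
      simpa using (hasDerivAt_id p).const_sub 1
    have heq : deriv F (cv p) * deriv cv p = -1 := h1.unique h2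
    have hval : deriv cv p = -(deriv F (cv p))⁻¹ := by
      field_simp
      linear_combination heq
    exact hval ▸ hd.hasDerivAt
  set dcv : ℝ → ℝ := fun p => -(deriv F (cv p))⁻¹ with hdcv_def
  have hdcv_cont : ∀ p ∈ Ioo (0:ℝ) 1, ContinuousAt dcv p := fun p hp =>
    ((hf_cont.continuousAt.comp (hcv_contAt p hp)).inv₀
      (hf_pos _ (hcv_mem p hp)).ne').neg
  -- a ball around each p₀ where dcv is bounded
  have hball : ∀ p₀ ∈ Ioo (0:ℝ) 1, ∃ ε > 0, ∃ M : ℝ, 0 ≤ M ∧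
      Metric.ball p₀ ε ⊆ Ioo 0 1 ∧ ∀ p ∈ Metric.ball p₀ ε, |dcv p| ≤ M := by
    intro p₀ hp₀
    have h1 : ∀ᶠ p in 𝓝 p₀, dist (dcv p) (dcv p₀) < 1 :=
      Metric.tendsto_nhds.mp (hdcv_cont p₀ hp₀) 1 one_pos
    have h2 : ∀ᶠ p in 𝓝 p₀, dist (dcv p) (dcv p₀) < 1 ∧ p ∈ Ioo (0:ℝ) 1 :=
      h1.and (hIoo.eventually_mem hp₀)
    obtain ⟨ε, hε, hb⟩ := Metric.eventually_nhds_iff_ball.mp h2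
    refine ⟨ε, hε, |dcv p₀| + 1, by positivity, fun p hp => (hb p hp).2, fun p hp => ?_⟩
    have := (hb p hp).1
    rw [Real.dist_eq] at this
    have h3 := abs_sub_abs_le_abs_sub (dcv p) (dcv p₀)
    linarith
  set J : ℝ → ℝ := fun p => ∫ h, deriv (Fh h) (cv p) ∂Pi with hJ_def
  set K : ℝ → ℝ := fun p => ∫ h, deriv (deriv (Fh h)) (cv p) ∂Pi with hK_def
  -- derivative of I(p) = ∫ Fh h (cv p)
  have hI_deriv : ∀ p₀ ∈ Ioo (0:ℝ) 1,
      HasDerivAt (fun p => ∫ h, Fh h (cv p) ∂Pi) (J p₀ * dcv p₀) p₀ := by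
    intro p₀ hp₀
    obtain ⟨ε, hε, M, hM0, hball_sub, hMb⟩ := hball p₀ hp₀
    have key := hasDerivAt_integral_of_dominated_loc_of_deriv_le (μ := Pi)
      (F := fun p h => Fh h (cv p)) (F' := fun p h => deriv (Fh h) (cv p) * dcv p)
      (x₀ := p₀) (bound := fun _ => C * M) (Metric.ball_mem_nhds p₀ hε)
      (Eventually.of_forall fun p => (hFh_meas (cv p)).aestronglyMeasurable)
      (hintC _ 1 (hFh_meas _) (fun h => hFh01 h _))
      (((hmf (cv p₀)).mul_const _).aestronglyMeasurable)
      (ae_of_all _ fun h p hp => by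
        rw [Real.norm_eq_abs, abs_mul]
        exact mul_le_mul ((hbound h _).1) (hMb p hp) (abs_nonneg _) hC0)
      (integrable_const _)
      (ae_of_all _ fun h p hp => by
        have h1 : HasDerivAt (Fh h) (deriv (Fh h) (cv p)) (cv p) :=
          ((hFh_smooth h).differentiable two_ne_zero _).hasDerivAt
        exact h1.comp p (hcv_deriv p (hball_sub hp)))
    have heq : (∫ h, deriv (Fh h) (cv p₀) * dcv p₀ ∂Pi) = J p₀ * dcv p₀ :=
      integral_mul_const _ _
    exact heq ▸ key.2
  -- derivative of J
  have hJ_deriv : ∀ p₀ ∈ Ioo (0:ℝ) 1, HasDerivAt J (K p₀ * dcv p₀) p₀ := by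
    intro p₀ hp₀
    obtain ⟨ε, hε, M, hM0, hball_sub, hMb⟩ := hball p₀ hp₀
    have key := hasDerivAt_integral_of_dominated_loc_of_deriv_le (μ := Pi)
      (F := fun p h => deriv (Fh h) (cv p))
      (F' := fun p h => deriv (deriv (Fh h)) (cv p) * dcv p)
      (x₀ := p₀) (bound := fun _ => C * M) (Metric.ball_mem_nhds p₀ hε)
      (Eventually.of_forall fun p => (hmf (cv p)).aestronglyMeasurable)
      (hintC _ C (hmf _) (fun h => (hbound h _).1))
      (((hmf' (cv p₀)).mul_const _).aestronglyMeasurable)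
      (ae_of_all _ fun h p hp => by
        rw [Real.norm_eq_abs, abs_mul]
        exact mul_le_mul ((hbound h _).2) (hMb p hp) (abs_nonneg _) hC0)
      (integrable_const _)
      (ae_of_all _ fun h p hp => by
        have h1 : HasDerivAt (deriv (Fh h)) (deriv (deriv (Fh h)) (cv p)) (cv p) :=
          ((hfh_cd h).differentiable one_ne_zero _).hasDerivAt
        exact h1.comp p (hcv_deriv p (hball_sub hp)))
    have heq : (∫ h, deriv (deriv (Fh h)) (cv p₀) * dcv p₀ ∂Pi) = K p₀ * dcv p₀ :=
      integral_mul_const _ _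
    exact heq ▸ key.2
  -- continuity of K
  have hK_cont : ∀ p₀ ∈ Ioo (0:ℝ) 1, ContinuousAt K p₀ := by
    intro p₀ hp₀
    exact continuousAt_of_dominated (bound := fun _ => C)
      (Eventually.of_forall fun p => (hmf' (cv p)).aestronglyMeasurable)
      (Eventually.of_forall fun p => ae_of_all _ fun h => by
        simpa [Real.norm_eq_abs] using (hbound h (cv p)).2)
      (integrable_const _)
      (ae_of_all _ fun h => ((hfh'_cont h).continuousAt).comp (hcv_contAt p₀ hp₀))
  -- G = 1 - I
  have hG_eq : ∀ p, G p = 1 - ∫ h, Fh h (cv p) ∂Pi := by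
    intro p
    rw [hG p, integral_sub (integrable_const 1) (hintC _ 1 (hFh_meas _) fun h => hFh01 h _)]
    simp
  have hG_deriv : ∀ p ∈ Ioo (0:ℝ) 1, HasDerivAt G (-(J p * dcv p)) p := by
    intro p hp
    have h1 := (hI_deriv p hp).const_sub 1
    exact h1.congr_of_eventuallyEq (Eventually.of_forall fun q => hG_eq q)
  have hdG : ∀ p ∈ Ioo (0:ℝ) 1, deriv G p = -(J p * dcv p) := fun p hp =>
    (hG_deriv p hp).deriv
  -- second derivative
  set D2 : ℝ → ℝ := fun p =>
    (deriv (deriv F) (cv p) * J p - K p * deriv F (cv p)) / (deriv F (cv p))^3 with hD2_def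
  have hdG_deriv : ∀ p ∈ Ioo (0:ℝ) 1, HasDerivAt (deriv G) (D2 p) p := by
    intro p hp
    have hu : deriv F (cv p) ≠ 0 := (hf_pos _ (hcv_mem p hp)).ne'
    have hu_deriv : HasDerivAt (fun q => deriv F (cv q))
        (deriv (deriv F) (cv p) * -(deriv F (cv p))⁻¹) p := by
      have h1 : HasDerivAt (deriv F) (deriv (deriv F) (cv p)) (cv p) :=
        ((hf_cd.differentiable one_ne_zero) _).hasDerivAt
      exact h1.comp p (hcv_deriv p hp)
    have hdcv_deriv : HasDerivAt dcv
        (-(-(deriv (deriv F) (cv p) * -(deriv F (cv p))⁻¹) / deriv F (cv p) ^ 2)) p :=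
      (hu_deriv.inv hu).neg
    have hprod := ((hJ_deriv p hp).mul hdcv_deriv).neg
    have hev : deriv G =ᶠ[𝓝 p] fun q => -(J q * dcv q) := by
      filter_upwards [hIoo.eventually_mem hp] with q hq using hdG q hq
    have hfinal := hprod.congr_of_eventuallyEq hev
    refine hfinal.congr_deriv ?_
    simp only [hD2_def, hdcv_def]
    field_simp
    ring
  have hdG2 : ∀ p ∈ Ioo (0:ℝ) 1, deriv (deriv G) p = D2 p := fun p hp =>
    (hdG_deriv p hp).deriv
  -- nonpositivity of D2
  have hD2_nonpos : ∀ p ∈ Ioo (0:ℝ) 1, D2 p ≤ 0 := by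
    intro p hp
    simp only [hD2_def]
    have hxS : cv p ∈ S := hcv_mem p hp
    have hu : 0 < deriv F (cv p) := hf_pos _ hxS
    have hnum : deriv (deriv F) (cv p) * J p - K p * deriv F (cv p) ≤ 0 := by
      rw [sub_nonpos]
      have hJK : (∫ h, deriv (deriv F) (cv p) * deriv (Fh h) (cv p) ∂Pi) ≤
          ∫ h, deriv (deriv (Fh h)) (cv p) * deriv F (cv p) ∂Pi := by
        apply integral_mono
        · exact hintC _ (|deriv (deriv F) (cv p)| * C)
            ((hmf _).const_mul _)
            (fun h => by
              rw [abs_mul]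
              exact mul_le_mul_of_nonneg_left (hbound h _).1 (abs_nonneg _))
        · exact hintC _ (C * |deriv F (cv p)|)
            ((hmf' _).mul_const _)
            (fun h => by
              rw [abs_mul]
              exact mul_le_mul_of_nonneg_right (hbound h _).2 (abs_nonneg _))
        · intro h
          exact hMLR h _ hxS
      rw [integral_const_mul, integral_mul_const] at hJK
      simp only [hJ_def, hK_def]
      exact hJK
    exact div_nonpos_of_nonpos_of_nonneg hnum (pow_nonneg hu.le 3)
  -- continuity of D2 on Ioo
  have hD2_cont : ContinuousOn D2 (Ioo (0:ℝ) 1) := by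
    intro p hp
    have hu : deriv F (cv p) ≠ 0 := (hf_pos _ (hcv_mem p hp)).ne'
    have hJc : ContinuousAt J p := (hJ_deriv p hp).differentiableAt.continuousAt
    have hKc : ContinuousAt K p := hK_cont p hp
    have hcvc : ContinuousAt cv p := hcv_contAt p hp
    have h1 : ContinuousAt (fun q => deriv F (cv q)) p := hf_cont.continuousAt.comp hcvc
    have h2 : ContinuousAt (fun q => deriv (deriv F) (cv q)) p := hf'_cont.continuousAt.comp hcvc
    exact (((h2.mul hJc).sub (hKc.mul h1)).div (h1.pow 3) (pow_ne_zero 3 hu)).continuousWithinAt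
  refine ⟨?_, ?_, ?_⟩
  · -- concavity
    apply concaveOn_of_deriv2_nonpos (convex_Ioo 0 1)
    · exact fun p hp => (hG_deriv p hp).differentiableAt.continuousAt.continuousWithinAt
    · rw [interior_Ioo]
      exact fun p hp => (hG_deriv p hp).differentiableAt.differentiableWithinAt
    · rw [interior_Ioo]
      exact fun p hp => (hdG_deriv p hp).differentiableAt.differentiableWithinAt
    · rw [interior_Ioo]
      intro p hp
      have : deriv^[2] G p = deriv (deriv G) p := by
        simp [Function.iterate_succ, Function.iterate_zero]
      rw [this, hdG2 p hp]
      exact hD2_nonpos p hp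
  · -- ContDiffOn 1 (deriv G)
    rw [show (1 : WithTop ℕ∞) = 0 + 1 by norm_num, contDiffOn_succ_iff_deriv_of_isOpen hIoo]
    refine ⟨fun p hp => (hdG_deriv p hp).differentiableAt.differentiableWithinAt, ?_, ?_⟩
    · intro h; simp at h
    · rw [contDiffOn_zero]
      exact hD2_cont.congr fun p hp => hdG2 p hp
  · intro p hp
    rw [hdG2 p hp]
    exact hD2_nonpos p hp
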